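/- Let $G$ be a directed multigraph. A formal $\mathbb Z$-linear combination $\mathcal S$ of edges of $G$ is a $\mathbb Z$-linear combination of simple directed cycles of $G$ if and only if: (1) at every vertex $v$, the sum of coefficients of edges with source $v$ equals the sum of coefficients of edges with target $v$, and (2) every edge in the support of $\mathcal S$ lies on some simple directed cycle of $G$. -/

import Mathlib

open Classical in
/-- `c : Fin (k+1) → ε` is a simple directed cycle in the multigraph with source and target
maps `s, t`: consecutive edges are concatenable (cyclically) and the visited vertices (the
sources of the edges) are pairwise distinct. -/
def IsCycleFun {V ε : Type*} (s t : ε → V) (k : ℕ) (c : Fin (k + 1) → ε) : Prop :=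
  Function.Injective c ∧ (∀ i : Fin (k + 1), t (c i) = s (c (i + 1))) ∧
    Function.Injective fun i => s (c i)

open Classical in
/-- The characteristic vector (in `ℤ^{E(G)}`) of a simple directed cycle, viewing the cycle
as the formal sum of its edges. -/
noncomputable def cycChi {ε : Type*} {k : ℕ} (c : Fin (k + 1) → ε) : ε → ℤ :=
  fun e => if ∃ i, c i = e then 1 else 0

namespace Stmt12Aux

open Finset
open scoped Classical

variable {V ε : Type*} [Fintype V] [Fintype ε] (s t : ε → V)

def Cons (S : ε → ℤ) : Prop :=
  ∀ v : V, ∑ e ∈ Finset.univ.filter (fun e => s e = v), S e =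
    ∑ e ∈ Finset.univ.filter (fun e => t e = v), S e

/-- conservation predicate forms an `AddSubgroup`. -/
def consGroup : AddSubgroup (ε → ℤ) where
  carrier := {S | Cons s t S}
  zero_mem' := by intro v; simp
  add_mem' := by
    intro a b ha hb v
    simp only [Pi.add_apply, Finset.sum_add_distrib]
    rw [ha v, hb v]
  neg_mem' := by
    intro a ha v
    simp only [Pi.neg_apply, Finset.sum_neg_distrib]
    rw [ha v]

lemma cycChi_apply_eq_sum {k : ℕ} (c : Fin (k + 1) → ε) (hc : Function.Injective c) (e : ε) :
    cycChi c e = ∑ i : Fin (k + 1), if c i = e then 1 else 0 := by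
  classical
  unfold cycChi
  by_cases h : ∃ i, c i = e
  · obtain ⟨i, hi⟩ := h
    rw [if_pos ⟨i, hi⟩, Finset.sum_eq_single i]
    · rw [if_pos hi]
    · intro j _ hj
      rw [if_neg]
      intro hje
      exact hj (hc (hje.trans hi.symm))
    · simp
  · rw [if_neg h, eq_comm]
    apply Finset.sum_eq_zero
    intro i _
    rw [if_neg fun hi => h ⟨i, hi⟩]

lemma cons_cycChi {k : ℕ} (c : Fin (k + 1) → ε) (hc : IsCycleFun s t k c) :
    Cons s t (cycChi c) := by
  classical
  intro v
  have key : ∀ (g : ε → V), ∑ e ∈ Finset.univ.filter (fun e => g e = v), cycChi c e =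
      ∑ i : Fin (k + 1), if g (c i) = v then 1 else 0 := by
    intro g
    calc ∑ e ∈ Finset.univ.filter (fun e => g e = v), cycChi c e
        = ∑ e ∈ Finset.univ.filter (fun e => g e = v), ∑ i : Fin (k+1), if c i = e then 1 else 0 := by
          exact Finset.sum_congr rfl fun e _ => cycChi_apply_eq_sum c hc.1 e
      _ = ∑ i : Fin (k+1), ∑ e ∈ Finset.univ.filter (fun e => g e = v), if c i = e then (1:ℤ) else 0 :=
          Finset.sum_comm
      _ = ∑ i : Fin (k+1), if g (c i) = v then 1 else 0 := by
          apply Finset.sum_congr rfl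
          intro i _
          rw [Finset.sum_ite_eq]
          simp
  rw [key s, key t]
  have : ∀ i : Fin (k+1), (if t (c i) = v then (1:ℤ) else 0) = if s (c (i+1)) = v then 1 else 0 := by
    intro i; rw [hc.2.1 i]
  rw [Finset.sum_congr rfl fun i _ => this i]
  exact (Fintype.sum_equiv (Equiv.addRight (1 : Fin (k+1)))
    (fun i => if s (c (i+1)) = v then (1:ℤ) else 0)
    (fun j => if s (c j) = v then (1:ℤ) else 0) (fun i => by simp; exact if_congr Iff.rfl rfl rfl)).symm


lemma step_lemma (S : ε → ℤ) (hC : Cons s t S) (hpos : ∀ e, 0 ≤ S e) :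
    ∀ e : ε, 0 < S e → ∃ e', s e' = t e ∧ 0 < S e' := by
  intro e he
  by_contra h
  push_neg at h
  have h1 : ∑ e' ∈ Finset.univ.filter (fun e' => s e' = t e), S e' = 0 := by
    apply le_antisymm
    · apply Finset.sum_nonpos
      intro e' he'
      rw [Finset.mem_filter] at he'
      exact h e' he'.2
    · apply Finset.sum_nonneg
      intro e' _
      exact hpos e'
  have h2 : 0 < ∑ e' ∈ Finset.univ.filter (fun e' => t e' = t e), S e' := by
    apply lt_of_lt_of_le he
    apply Finset.single_le_sum (f := S) (fun e' _ => hpos e')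
    simp
  have h3 := hC (t e)
  linarith

lemma exists_pos_cycle (S : ε → ℤ) (hC : Cons s t S) (hpos : ∀ e, 0 ≤ S e)
    (e₀ : ε) (he₀ : 0 < S e₀) :
    ∃ (k : ℕ) (c : Fin (k + 1) → ε), IsCycleFun s t k c ∧ ∀ i, 0 < S (c i) := by
  choose g hg1 hg2 using step_lemma s t S hC hpos
  let F : ℕ → {e : ε // 0 < S e} := fun n =>
    Nat.rec ⟨e₀, he₀⟩ (fun _ p => ⟨g p.1 p.2, hg2 p.1 p.2⟩) n
  set f : ℕ → ε := fun n => (F n).1 with hf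
  have hfpos : ∀ n, 0 < S (f n) := fun n => (F n).2
  have hf1 : ∀ n, s (f (n + 1)) = t (f n) := fun n => hg1 (F n).1 (F n).2
  -- pigeonhole
  have hni : ∃ a b : ℕ, a < b ∧ s (f a) = s (f b) := by
    have hcard : Fintype.card V < Fintype.card (Fin (Fintype.card V + 1)) := by simp
    obtain ⟨a, b, hab, hne⟩ := Fintype.exists_ne_map_eq_of_card_lt
      (fun i : Fin (Fintype.card V + 1) => s (f i)) hcard
    rcases lt_or_gt_of_ne (fun h : (a : ℕ) = (b : ℕ) => hab (Fin.ext h)) with h | h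
    · exact ⟨a, b, h, hne⟩
    · exact ⟨b, a, h, hne.symm⟩
  have hP : ∃ j, ∃ i, i < j ∧ s (f i) = s (f j) := by
    obtain ⟨a, b, h1, h2⟩ := hni
    exact ⟨b, a, h1, h2⟩
  let j₀ := Nat.find hP
  obtain ⟨i₀, hi₀lt, hi₀eq⟩ : ∃ i, i < j₀ ∧ s (f i) = s (f j₀) := Nat.find_spec hP
  set k := j₀ - i₀ - 1 with hkdef
  have hk : i₀ + k + 1 = j₀ := by omega
  refine ⟨k, fun m => f (i₀ + m.val), ⟨?_, ?_, ?_⟩, fun i => hfpos _⟩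
  · -- edge injectivity, from source injectivity; we prove source inj first as `key`
    intro a b hab
    by_contra hne
    have key : ∀ a b : Fin (k+1), a.val < b.val → s (f (i₀ + a.val)) ≠ s (f (i₀ + b.val)) := by
      intro a b hlt heq
      have hblt : i₀ + b.val < j₀ := by have := b.isLt; omega
      exact Nat.find_min hP hblt ⟨i₀ + a.val, by omega, heq⟩
    rcases lt_trichotomy a.val b.val with h | h | h
    · exact key a b h (congrArg s hab)
    · exact hne (Fin.ext h)
    · exact key b a h (congrArg s hab.symm)
  · -- cyclic concatenation
    intro m
    show t (f (i₀ + m.val)) = s (f (i₀ + ((m + 1 : Fin (k+1))).val))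
    by_cases hm : m.val = k
    · have hm1 : ((m + 1 : Fin (k+1))).val = 0 := by
        have : m = Fin.last k := Fin.ext hm
        simp [this]
      rw [hm1]
      calc t (f (i₀ + m.val)) = s (f (i₀ + m.val + 1)) := (hf1 _).symm
        _ = s (f j₀) := by rw [hm, hk]
        _ = s (f (i₀ + 0)) := by rw [Nat.add_zero, ← hi₀eq]
    · have hm1 : ((m + 1 : Fin (k+1))).val = m.val + 1 := by
        have : m ≠ Fin.last k := fun h => hm (by rw [h]; rfl)
        rw [Fin.val_add_one, if_neg this]
      rw [hm1]
      calc t (f (i₀ + m.val)) = s (f (i₀ + m.val + 1)) := (hf1 _).symm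
        _ = s (f (i₀ + (m.val + 1))) := by rw [Nat.add_assoc]
  · -- source injectivity
    intro a b heq
    by_contra hne
    have key : ∀ a b : Fin (k+1), a.val < b.val → s (f (i₀ + a.val)) ≠ s (f (i₀ + b.val)) := by
      intro a b hlt heq
      have hblt : i₀ + b.val < j₀ := by have := b.isLt; omega
      exact Nat.find_min hP hblt ⟨i₀ + a.val, by omega, heq⟩
    rcases lt_trichotomy a.val b.val with h | h | h
    · exact key a b h heq
    · exact hne (Fin.ext h)
    · exact key b a h heq.symm


lemma cycChi_nonneg {k : ℕ} (c : Fin (k + 1) → ε) (e : ε) : 0 ≤ cycChi c e := by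
  unfold cycChi; split <;> simp

lemma cycChi_self {k : ℕ} (c : Fin (k + 1) → ε) {e : ε} (h : ∃ i, c i = e) :
    cycChi c e = 1 := by
  unfold cycChi; rw [if_pos h]

/-- the generating set -/
abbrev Gen : Set (ε → ℤ) :=
  {x : ε → ℤ | ∃ (k : ℕ) (c : Fin (k + 1) → ε), IsCycleFun s t k c ∧ x = cycChi c}

lemma nonneg_mem : ∀ (n : ℕ) (S : ε → ℤ), Cons s t S → (∀ e, 0 ≤ S e) →
    (∑ e, S e) ≤ (n : ℤ) → S ∈ AddSubgroup.closure (Gen s t) := by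
  intro n
  induction n with
  | zero =>
    intro S hC hpos hle
    have hsum0 : ∑ e, S e = 0 :=
      le_antisymm (by exact_mod_cast hle) (Finset.sum_nonneg fun e _ => hpos e)
    have hz := (Finset.sum_eq_zero_iff_of_nonneg (fun e _ => hpos e)).1 hsum0
    have : S = 0 := funext fun e => hz e (Finset.mem_univ e)
    rw [this]; exact AddSubgroup.zero_mem _
  | succ n ih =>
    intro S hC hpos hle
    by_cases hz : ∀ e, S e = 0
    · have : S = 0 := funext hz
      rw [this]; exact AddSubgroup.zero_mem _
    push_neg at hz
    obtain ⟨e₀, he₀⟩ := hz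
    have he₀' : 0 < S e₀ := lt_of_le_of_ne (hpos e₀) (Ne.symm he₀)
    obtain ⟨k, c, hcyc, hcpos⟩ := exists_pos_cycle s t S hC hpos e₀ he₀'
    set S' : ε → ℤ := S - cycChi c with hS'
    have hC' : Cons s t S' := (consGroup s t).sub_mem hC (cons_cycChi s t c hcyc)
    have hpos' : ∀ e, 0 ≤ S' e := by
      intro e
      show 0 ≤ S e - cycChi c e
      by_cases h : ∃ i, c i = e
      · obtain ⟨i, hi⟩ := h
        have := hcpos i
        rw [hi] at this
        rw [cycChi_self c ⟨i, hi⟩]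
        omega
      · unfold cycChi; rw [if_neg h]
        simpa using hpos e
    have hchi1 : (1 : ℤ) ≤ ∑ e, cycChi c e := by
      have h0 : cycChi c (c 0) = 1 := cycChi_self c ⟨0, rfl⟩
      calc (1:ℤ) = cycChi c (c 0) := h0.symm
        _ ≤ ∑ e, cycChi c e :=
          Finset.single_le_sum (fun e _ => cycChi_nonneg c e) (Finset.mem_univ _)
    have hle' : (∑ e, S' e) ≤ (n : ℤ) := by
      have : ∑ e, S' e = ∑ e, S e - ∑ e, cycChi c e := by
        rw [← Finset.sum_sub_distrib]; rfl
      rw [this]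
      push_cast at hle ⊢
      linarith
    have h1 : cycChi c ∈ AddSubgroup.closure (Gen s t) :=
      AddSubgroup.subset_closure ⟨k, c, hcyc, rfl⟩
    have h2 : S' ∈ AddSubgroup.closure (Gen s t) := ih S' hC' hpos' hle'
    have : S = S' + cycChi c := by
      funext e; show S e = S e - cycChi c e + cycChi c e; ring
    rw [this]
    exact AddSubgroup.add_mem _ h2 h1

end Stmt12Aux

open Classical in
/-- A formal `ℤ`-linear combination of edges is a `ℤ`-linear combination of simple directed
cycles iff (1) at every vertex the coefficient sums over outgoing and incoming edges agree,
and (2) every edge in the support lies on some simple directed cycle. -/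
theorem stmt12 (V ε : Type*) [Fintype V] [Fintype ε] (s t : ε → V) (S : ε → ℤ) :
    S ∈ AddSubgroup.closure
        {x : ε → ℤ | ∃ (k : ℕ) (c : Fin (k + 1) → ε), IsCycleFun s t k c ∧ x = cycChi c} ↔
      ((∀ v : V, ∑ e ∈ Finset.univ.filter (fun e => s e = v), S e =
          ∑ e ∈ Finset.univ.filter (fun e => t e = v), S e) ∧
        ∀ e : ε, S e ≠ 0 →
          ∃ (k : ℕ) (c : Fin (k + 1) → ε), IsCycleFun s t k c ∧ ∃ i, c i = e) := by
  classical
  open Stmt12Aux in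
  constructor
  · -- forward
    intro hS
    let H : AddSubgroup (ε → ℤ) :=
      { carrier := {x | Stmt12Aux.Cons s t x ∧ ∀ e, x e ≠ 0 →
          ∃ (k : ℕ) (c : Fin (k + 1) → ε), IsCycleFun s t k c ∧ ∃ i, c i = e}
        zero_mem' := ⟨(Stmt12Aux.consGroup s t).zero_mem, fun e he => absurd rfl he⟩
        add_mem' := by
          intro a b ha hb
          refine ⟨(Stmt12Aux.consGroup s t).add_mem ha.1 hb.1, fun e he => ?_⟩
          by_cases h : a e = 0
          · exact hb.2 e (by simpa [h] using he)
          · exact ha.2 e h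
        neg_mem' := by
          intro a ha
          exact ⟨(Stmt12Aux.consGroup s t).neg_mem ha.1, fun e he => ha.2 e (by simpa using he)⟩ }
    have hgen : {x : ε → ℤ | ∃ (k : ℕ) (c : Fin (k + 1) → ε), IsCycleFun s t k c ∧ x = cycChi c}
        ⊆ H := by
      rintro x ⟨k, c, hc, rfl⟩
      refine ⟨Stmt12Aux.cons_cycChi s t c hc, fun e he => ⟨k, c, hc, ?_⟩⟩
      by_contra h
      exact he (by unfold cycChi; rw [if_neg h])
    exact (AddSubgroup.closure_le H).2 hgen hS
  · -- backward
    rintro ⟨h1, h2⟩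
    choose K C hcyc honc using h2
    set F : Finset ε := Finset.univ.filter (fun e => S e ≠ 0) with hF
    have hmem : ∀ p : {x // x ∈ F}, S p.1 ≠ 0 := fun p => (Finset.mem_filter.1 p.2).2
    set T : ε → ℤ := ∑ p ∈ F.attach, cycChi (C p.1 (hmem p)) with hT
    have hTZ : T ∈ AddSubgroup.closure (Stmt12Aux.Gen s t) :=
      AddSubgroup.sum_mem _ fun p _ =>
        AddSubgroup.subset_closure ⟨K p.1 (hmem p), C p.1 (hmem p), hcyc p.1 (hmem p), rfl⟩
    have hTC : Stmt12Aux.Cons s t T := by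
      have : T ∈ Stmt12Aux.consGroup s t :=
        AddSubgroup.sum_mem _ fun p _ => Stmt12Aux.cons_cycChi s t _ (hcyc p.1 (hmem p))
      exact this
    have hTapp : ∀ e, T e = ∑ p ∈ F.attach, cycChi (C p.1 (hmem p)) e := by
      intro e; rw [hT]; exact Finset.sum_apply e F.attach _
    have hTnn : ∀ e, 0 ≤ T e := by
      intro e; rw [hTapp]
      exact Finset.sum_nonneg fun p _ => Stmt12Aux.cycChi_nonneg _ e
    have hT1 : ∀ e, S e ≠ 0 → 1 ≤ T e := by
      intro e he
      set p : {x // x ∈ F} := ⟨e, Finset.mem_filter.2 ⟨Finset.mem_univ e, he⟩⟩ with hp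
      have hpm : p ∈ F.attach := Finset.mem_attach _ _
      rw [hTapp]
      calc (1:ℤ) = cycChi (C p.1 (hmem p)) e :=
            (Stmt12Aux.cycChi_self _ (honc p.1 (hmem p))).symm
        _ ≤ _ := Finset.single_le_sum
            (f := fun p : {x // x ∈ F} => cycChi (C p.1 (hmem p)) e)
            (fun p _ => Stmt12Aux.cycChi_nonneg _ e) hpm
    set M : ℤ := ∑ e, |S e| with hM
    have hM0 : 0 ≤ M := Finset.sum_nonneg fun e _ => abs_nonneg _
    have hMe : ∀ e, |S e| ≤ M := fun e =>
      Finset.single_le_sum (fun e' _ => abs_nonneg (S e')) (Finset.mem_univ e)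
    set W : ε → ℤ := S + M • T with hW
    have hWapp : ∀ e, W e = S e + M * T e := fun e => rfl
    have hWC : Stmt12Aux.Cons s t W :=
      (Stmt12Aux.consGroup s t).add_mem h1 ((Stmt12Aux.consGroup s t).zsmul_mem hTC M)
    have hWnn : ∀ e, 0 ≤ W e := by
      intro e
      rw [hWapp]
      by_cases h : S e = 0
      · rw [h]; simpa using mul_nonneg hM0 (hTnn e)
      · have hA : M ≤ M * T e := le_mul_of_one_le_right hM0 (hT1 e h)
        have hB : -S e ≤ |S e| := neg_le_abs _
        have := hMe e
        linarith
    have hWZ : W ∈ AddSubgroup.closure (Stmt12Aux.Gen s t) := by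
      apply Stmt12Aux.nonneg_mem s t (∑ e, W e).toNat W hWC hWnn
      exact Int.self_le_toNat _
    have hSW : S = W - M • T := by
      funext e; show S e = S e + M * T e - M * T e; ring
    rw [hSW]
    exact AddSubgroup.sub_mem _ hWZ (AddSubgroup.zsmul_mem _ hTZ M)
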